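/- Let Q^s be the s-dimensional hypercube, s ≥ 1. For every j with 1 ≤ j ≤ 2^s and every subset S of V(Q^s) with |S| = j, the number of edges of Q^s with both endpoints in S is at most the number of edges of Q^s with both endpoints in L_j; that is, L_j is an optimal set on j vertices for the maximum subgraph problem in Q^s. -/

import Mathlib

open scoped Classical

/-- Number of edges of `G` with both endpoints in `S`. -/
noncomputable def interiorCount {V : Type*} [Fintype V] (G : SimpleGraph V)
    (S : Finset V) : ℕ :=
  (G.edgeFinset.filter (fun e => ∀ v ∈ e, v ∈ S)).card

/-- The `s`-dimensional hypercube `Q^s`, with vertices identified with the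
integers `0, 1, …, 2^s − 1` via binary representation: two vertices are
adjacent iff they differ in exactly one coordinate, i.e. iff their bitwise
xor is a power `2^i` with `i < s`. -/
def hypercubeGraph (s : ℕ) : SimpleGraph (Fin (2 ^ s)) :=
  SimpleGraph.fromRel (fun u v => ∃ i < s, u.val ^^^ v.val = 2 ^ i)

/-- popcount -/
def pc : ℕ → ℕ
  | 0 => 0
  | n+1 => pc ((n+1)/2) + (n+1) % 2
decreasing_by exact Nat.div_lt_self (Nat.succ_pos n) one_lt_two

lemma pc_zero : pc 0 = 0 := by simp [pc]

lemma pc_eq (n : ℕ) (h : n ≠ 0) : pc n = pc (n/2) + n % 2 := by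
  cases n with
  | zero => exact absurd rfl h
  | succ m => rw [pc]

lemma pc_two_mul (m : ℕ) : pc (2*m) = pc m := by
  rcases Nat.eq_zero_or_pos m with rfl | hm
  · simp [pc]
  · rw [pc_eq (2*m) (by omega)]
    have h1 : 2*m/2 = m := by omega
    have h2 : 2*m % 2 = 0 := by omega
    rw [h1, h2]
    omega

lemma pc_two_mul_add_one (m : ℕ) : pc (2*m+1) = pc m + 1 := by
  rw [pc_eq (2*m+1) (by omega)]
  have h1 : (2*m+1)/2 = m := by omega
  have h2 : (2*m+1) % 2 = 1 := by omega
  rw [h1, h2]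

/-- number of edges in the initial segment of size m of the infinite hypercube -/
def ff (m : ℕ) : ℕ := ∑ k ∈ Finset.range m, pc k

lemma ff_succ (m : ℕ) : ff (m+1) = ff m + pc m := Finset.sum_range_succ _ _

lemma ff_two_mul (m : ℕ) : ff (2*m) = 2 * ff m + m := by
  induction m with
  | zero => simp [ff]
  | succ n ih =>
    have h1 : 2*(n+1) = (2*n+1)+1 := by ring
    rw [h1, ff_succ, show 2*n+1 = (2*n)+1 from rfl, ff_succ, ih,
      pc_two_mul, show (2*n)+1 = 2*n+1 from rfl, pc_two_mul_add_one, ff_succ]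
    ring

lemma ff_two_mul_add_one (m : ℕ) : ff (2*m+1) = ff m + ff (m+1) + m := by
  rw [ff_succ, ff_two_mul, pc_two_mul, ff_succ]; ring

lemma keyIneq : ∀ n a b : ℕ, a + b ≤ n → ff a + ff b + min a b ≤ ff (a+b) := by
  intro n
  induction n with
  | zero =>
    intro a b h
    have ha : a = 0 := by omega
    have hb : b = 0 := by omega
    subst ha; subst hb
    simp [ff]
  | succ n ih =>
    intro a b hab
    rcases Nat.eq_zero_or_pos a with rfl | ha
    · simp [ff]
    rcases Nat.eq_zero_or_pos b with rfl | hb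
    · simp [ff]
    obtain ⟨a', ha'⟩ := Nat.even_or_odd' a
    obtain ⟨b', hb'⟩ := Nat.even_or_odd' b
    rcases ha' with rfl | rfl <;> rcases hb' with rfl | rfl
    · -- even, even
      have h1 := ff_two_mul a'
      have h2 := ff_two_mul b'
      have h3 : ff (2*a' + 2*b') = 2 * ff (a'+b') + (a'+b') := by
        rw [show 2*a'+2*b' = 2*(a'+b') by ring, ff_two_mul]
      have h4 := ih a' b' (by omega)
      omega
    · -- even, odd
      have h1 := ff_two_mul a'
      have h2 := ff_two_mul_add_one b'
      have h3 : ff (2*a' + (2*b'+1)) = ff (a'+b') + ff (a'+b'+1) + (a'+b') := by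
        rw [show 2*a'+(2*b'+1) = 2*(a'+b')+1 by ring, ff_two_mul_add_one]
      have h4 := ih a' b' (by omega)
      have h5 := ih a' (b'+1) (by omega)
      have h6 : a' + (b'+1) = a'+b'+1 := by ring
      rw [h6] at h5
      omega
    · -- odd, even
      have h1 := ff_two_mul_add_one a'
      have h2 := ff_two_mul b'
      have h3 : ff (2*a'+1 + 2*b') = ff (a'+b') + ff (a'+b'+1) + (a'+b') := by
        rw [show 2*a'+1+2*b' = 2*(a'+b')+1 by ring, ff_two_mul_add_one]
      have h4 := ih a' b' (by omega)
      have h5 := ih (a'+1) b' (by omega)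
      have h6 : a'+1+b' = a'+b'+1 := by ring
      rw [h6] at h5
      omega
    · -- odd, odd
      have h1 := ff_two_mul_add_one a'
      have h2 := ff_two_mul_add_one b'
      have h3 : ff (2*a'+1 + (2*b'+1)) = 2 * ff (a'+b'+1) + (a'+b'+1) := by
        rw [show 2*a'+1+(2*b'+1) = 2*(a'+b'+1) by ring, ff_two_mul]
      have h4 := ih a' (b'+1) (by omega)
      have h5 := ih (a'+1) b' (by omega)
      have h6 : a' + (b'+1) = a'+b'+1 := by ring
      have h7 : a'+1+b' = a'+b'+1 := by ring
      rw [h6] at h4; rw [h7] at h5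
      omega

/-! ### bit lemmas -/

lemma xor_two_pow_lt {x k : ℕ} (h : x.testBit k = true) : x ^^^ 2^k < x := by
  apply Nat.lt_of_testBit k
  · simp [Nat.testBit_xor, h, Nat.testBit_two_pow_self]
  · exact h
  · intro j hj
    simp [Nat.testBit_xor, Nat.testBit_two_pow_of_ne (by omega : k ≠ j)]

lemma not_lt_of_testBit {x s : ℕ} (h : x.testBit s = true) : ¬ x < 2^s :=
  fun l => by simp [Nat.testBit_lt_two_pow l] at h

lemma lt_of_testBit_false {x s : ℕ} (hx : x < 2^(s+1)) (h : x.testBit s = false) :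
    x < 2^s := by
  apply Nat.lt_pow_two_of_testBit
  intro i hi
  rcases eq_or_lt_of_le hi with rfl | hlt
  · exact h
  · exact Nat.testBit_lt_two_pow (lt_of_lt_of_le hx (Nat.pow_le_pow_right two_pos hlt))

lemma testBit_top_of_ge {x s : ℕ} (hx : x < 2^(s+1)) (h : ¬ x < 2^s) :
    x.testBit s = true := by
  by_contra hb
  exact h (lt_of_testBit_false hx (by simpa using hb))

/-! ### edge counting on Finsets of naturals -/

noncomputable def cnt (s v : ℕ) (S : Finset ℕ) : ℕ :=
  ((Finset.range s).filter (fun i => v.testBit i = true ∧ v ^^^ 2^i ∈ S)).card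

noncomputable def ec (s : ℕ) (S : Finset ℕ) : ℕ := ∑ v ∈ S, cnt s v S

lemma ec_le : ∀ (s : ℕ) (S : Finset ℕ), (∀ v ∈ S, v < 2^s) → ec s S ≤ ff S.card := by
  intro s
  induction s with
  | zero =>
    intro S hS
    have : ec 0 S = 0 := by
      apply Finset.sum_eq_zero
      intro v hv
      simp [cnt]
    omega
  | succ s ih =>
    intro S hS
    set S0 : Finset ℕ := S.filter (fun v => v < 2^s) with hS0def
    set S1 : Finset ℕ := S.filter (fun v => ¬ v < 2^s) with hS1def
    set T : Finset ℕ := S1.image (fun v => v ^^^ 2^s) with hTdef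
    have hinj : Function.Injective (fun v : ℕ => v ^^^ 2^s) := fun a b h => by
      have := congrArg (fun x => x ^^^ 2^s) h
      simpa [xor_cancel_right] using this
    have hS1top : ∀ v ∈ S1, v.testBit s = true := by
      intro v hv
      rw [hS1def] at hv
      simp only [Finset.mem_filter] at hv
      exact testBit_top_of_ge (hS v hv.1) hv.2
    have hTlt : ∀ w ∈ T, w < 2^s := by
      intro w hw
      rw [hTdef] at hw
      simp only [Finset.mem_image] at hw
      obtain ⟨v, hv, rfl⟩ := hw
      apply Nat.lt_pow_two_of_testBit
      intro i hi
      rcases eq_or_lt_of_le hi with rfl | hlt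
      · simp [Nat.testBit_xor, hS1top v hv, Nat.testBit_two_pow_self]
      · have h1 : v.testBit i = false := by
          rw [hS1def] at hv
          simp only [Finset.mem_filter] at hv
          exact Nat.testBit_lt_two_pow
            (lt_of_lt_of_le (hS v hv.1) (Nat.pow_le_pow_right two_pos hlt))
        simp [Nat.testBit_xor, h1, Nat.testBit_two_pow_of_ne (by omega : s ≠ i)]
    have hmemT : ∀ x, x < 2^s → (x ∈ T ↔ x ^^^ 2^s ∈ S) := by
      intro x hx
      have hxs : ¬ (x ^^^ 2^s) < 2^s := by
        apply not_lt_of_testBit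
        simp [Nat.testBit_xor, Nat.testBit_lt_two_pow hx, Nat.testBit_two_pow_self]
      constructor
      · intro hxT
        rw [hTdef] at hxT
        simp only [Finset.mem_image] at hxT
        obtain ⟨v, hv, rfl⟩ := hxT
        rw [hS1def] at hv
        simp only [Finset.mem_filter] at hv
        rw [xor_cancel_right]; exact hv.1
      · intro hxS
        rw [hTdef]
        simp only [Finset.mem_image]
        exact ⟨x ^^^ 2^s, by
          rw [hS1def]; simp only [Finset.mem_filter]; exact ⟨hxS, hxs⟩,
          xor_cancel_right _ _⟩
    -- splitting of the sum
    have hsplit : ec (s+1) S = ∑ v ∈ S0, cnt (s+1) v S + ∑ v ∈ S1, cnt (s+1) v S := by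
      rw [ec, hS0def, hS1def, Finset.sum_filter_add_sum_filter_not]
    -- on S0 the count equals the count in the lower cube
    have hc0 : ∀ v ∈ S0, cnt (s+1) v S = cnt s v S0 := by
      intro v hv
      rw [hS0def] at hv
      simp only [Finset.mem_filter] at hv
      obtain ⟨hvS, hvlt⟩ := hv
      unfold cnt
      congr 1
      ext i
      simp only [Finset.mem_filter, Finset.mem_range]
      constructor
      · rintro ⟨hi, hbit, hmem⟩
        have his : i ≠ s := by
          intro h; subst h
          rw [Nat.testBit_lt_two_pow hvlt] at hbit
          exact Bool.false_ne_true hbit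
        have hilt : i < s := by omega
        have hxlt : v ^^^ 2^i < 2^s :=
          Nat.xor_lt_two_pow hvlt (Nat.pow_lt_pow_right one_lt_two hilt)
        exact ⟨hilt, hbit, by rw [hS0def]; simp [hmem, hxlt]⟩
      · rintro ⟨hi, hbit, hmem⟩
        rw [hS0def] at hmem
        simp only [Finset.mem_filter] at hmem
        exact ⟨by omega, hbit, hmem.1⟩
    -- on S1 the count equals count in T plus a cross indicator
    have hc1 : ∀ v ∈ S1, cnt (s+1) v S
        = cnt s (v ^^^ 2^s) T + (if v ^^^ 2^s ∈ S0 then 1 else 0) := by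
      intro v hv
      have hvtop := hS1top v hv
      have hvS : v ∈ S := by rw [hS1def] at hv; exact (Finset.mem_filter.mp hv).1
      have hvT : v ^^^ 2^s ∈ T := by
        rw [hTdef]; exact Finset.mem_image_of_mem _ hv
      have hwlt : v ^^^ 2^s < 2^s := hTlt _ hvT
      unfold cnt
      rw [Finset.range_add_one, Finset.filter_insert]
      have hsmem : v.testBit s = true ∧ v ^^^ 2^s ∈ S ↔ v ^^^ 2^s ∈ S0 := by
        rw [hS0def]
        simp [hvtop, hwlt, Finset.mem_filter]
      have hlow : (Finset.range s).filter (fun i => v.testBit i = true ∧ v ^^^ 2^i ∈ S)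
          = (Finset.range s).filter
            (fun i => (v ^^^ 2^s).testBit i = true ∧ (v ^^^ 2^s) ^^^ 2^i ∈ T) := by
        ext i
        simp only [Finset.mem_filter, Finset.mem_range]
        constructor
        · rintro ⟨hi, hbit, hmem⟩
          refine ⟨hi, ?_, ?_⟩
          · simp [Nat.testBit_xor, hbit, Nat.testBit_two_pow_of_ne (by omega : s ≠ i)]
          · have hlt : (v ^^^ 2^s) ^^^ 2^i < 2^s :=
              Nat.xor_lt_two_pow hwlt (Nat.pow_lt_pow_right one_lt_two hi)
            rw [hmemT _ hlt]
            have : ((v ^^^ 2^s) ^^^ 2^i) ^^^ 2^s = v ^^^ 2^i := by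
              rw [Nat.xor_assoc, Nat.xor_comm (2^i), ← Nat.xor_assoc,
                xor_cancel_right]
            rwa [this]
        · rintro ⟨hi, hbit, hmem⟩
          refine ⟨hi, ?_, ?_⟩
          · have := hbit
            simpa [Nat.testBit_xor, Nat.testBit_two_pow_of_ne (by omega : s ≠ i)]
              using this
          · have hlt : (v ^^^ 2^s) ^^^ 2^i < 2^s :=
              Nat.xor_lt_two_pow hwlt (Nat.pow_lt_pow_right one_lt_two hi)
            rw [hmemT _ hlt] at hmem
            have : ((v ^^^ 2^s) ^^^ 2^i) ^^^ 2^s = v ^^^ 2^i := by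
              rw [Nat.xor_assoc, Nat.xor_comm (2^i), ← Nat.xor_assoc,
                xor_cancel_right]
            rwa [this] at hmem
      by_cases hcr : v ^^^ 2^s ∈ S0
      · rw [if_pos (hsmem.mpr hcr), if_pos hcr, Finset.card_insert_of_notMem (by simp),
          hlow]
      · rw [if_neg (fun h => hcr (hsmem.mp h)), if_neg hcr, hlow]
        omega
    -- sum over S1 via image
    have hsum1 : ∑ v ∈ S1, cnt (s+1) v S
        = ec s T + (T.filter (fun w => w ∈ S0)).card := by
      rw [Finset.sum_congr rfl hc1, Finset.sum_add_distrib]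
      congr 1
      · rw [ec, hTdef, Finset.sum_image (fun a _ b _ h => hinj h)]
      · rw [Finset.card_filter, hTdef, Finset.sum_image (fun a _ b _ h => hinj h)]
    have hsum0 : ∑ v ∈ S0, cnt (s+1) v S = ec s S0 := by
      rw [ec]; exact Finset.sum_congr rfl hc0
    -- cross term bounds
    have hC1 : (T.filter (fun w => w ∈ S0)).card ≤ T.card := Finset.card_filter_le _ _
    have hC2 : (T.filter (fun w => w ∈ S0)).card ≤ S0.card := by
      apply Finset.card_le_card
      intro x hx
      exact (Finset.mem_filter.mp hx).2
    -- cardinalities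
    have hcardT : T.card = S1.card := Finset.card_image_of_injective _ hinj
    have hcards : S0.card + S1.card = S.card := by
      rw [hS0def, hS1def]; exact Finset.card_filter_add_card_filter_not _
    -- apply induction hypothesis and key inequality
    have ih0 : ec s S0 ≤ ff S0.card := by
      apply ih
      intro v hv
      rw [hS0def] at hv
      exact (Finset.mem_filter.mp hv).2
    have ihT : ec s T ≤ ff T.card := ih T hTlt
    have hkey := keyIneq (S0.card + T.card) S0.card T.card le_rfl
    have : S0.card + T.card = S.card := by omega
    rw [this] at hkey
    rw [hsplit, hsum0, hsum1]
    have : (T.filter (fun w => w ∈ S0)).card ≤ min S0.card T.card := le_min hC2 hC1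
    omega

/-! ### counting bits in a range -/

lemma pc_sum : ∀ v s : ℕ, v < 2^s →
    (∑ i ∈ Finset.range s, (v.testBit i).toNat) = pc v := by
  intro v
  induction v using Nat.strong_induction_on with
  | _ v ihv =>
    intro s hv
    rcases Nat.eq_zero_or_pos v with rfl | hvpos
    · simp [pc_zero, Nat.zero_testBit]
    · cases s with
      | zero => simp at hv; omega
      | succ t =>
        rw [Finset.sum_range_succ']
        have h0 : (v.testBit 0).toNat = v % 2 := by
          rw [Nat.testBit_zero]
          rcases Nat.mod_two_eq_zero_or_one v with h | h <;> simp [h]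
        have hstep : ∀ i, (v.testBit (i+1)).toNat = ((v/2).testBit i).toNat := by
          intro i; rw [Nat.testBit_add_one]
        simp only [hstep]
        have hlt : v / 2 < v := Nat.div_lt_self hvpos one_lt_two
        have hbound : v / 2 < 2^t := by
          have : (2:ℕ)^(t+1) = 2^t * 2 := by ring
          rw [this] at hv
          omega
        rw [ihv (v/2) hlt t hbound, h0, pc_eq v (by omega)]

lemma pc_card {s v : ℕ} (hv : v < 2^s) :
    ((Finset.range s).filter (fun i => v.testBit i = true)).card = pc v := by
  rw [Finset.card_filter, ← pc_sum v s hv]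
  apply Finset.sum_congr rfl
  intro i _
  cases h : v.testBit i <;> simp [h]

/-! ### the hypercube graph -/

lemma hyper_adj {s : ℕ} {u v : Fin (2^s)} :
    (hypercubeGraph s).Adj u v ↔ ∃ i < s, u.val ^^^ v.val = 2^i := by
  simp only [hypercubeGraph, SimpleGraph.fromRel_adj]
  constructor
  · rintro ⟨hne, h | h⟩
    · exact h
    · obtain ⟨i, his, hx⟩ := h
      exact ⟨i, his, by rw [Nat.xor_comm]; exact hx⟩
  · rintro ⟨i, his, hx⟩
    refine ⟨?_, Or.inl ⟨i, his, hx⟩⟩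
    intro he
    rw [he, Nat.xor_self] at hx
    have := Nat.two_pow_pos i
    omega

def eMax {n : ℕ} (e : Sym2 (Fin n)) : ℕ :=
  Sym2.lift ⟨fun a b => max a.val b.val, fun a b => max_comm _ _⟩ e

def eXor {n : ℕ} (e : Sym2 (Fin n)) : ℕ :=
  Sym2.lift ⟨fun a b => a.val ^^^ b.val, fun a b => Nat.xor_comm _ _⟩ e

@[simp] lemma eMax_mk {n : ℕ} (a b : Fin n) : eMax s(a, b) = max a.val b.val := rfl
@[simp] lemma eXor_mk {n : ℕ} (a b : Fin n) : eXor s(a, b) = a.val ^^^ b.val := rfl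

lemma sym2_ext {n : ℕ} {a b c d : Fin n} (h1 : a.val = c.val) (h2 : b.val = d.val) :
    s(a, b) = s(c, d) := by
  rw [Fin.ext h1, Fin.ext h2]

lemma sym2_ext_swap {n : ℕ} {a b c d : Fin n} (h1 : a.val = d.val)
    (h2 : b.val = c.val) : s(a, b) = s(c, d) :=
  (sym2_ext h1 h2).trans Sym2.eq_swap

/-- structure of a hypercube edge, directed from bigger to smaller endpoint -/
lemma edge_struct {s : ℕ} {u v : Fin (2^s)} (h : ∃ i < s, u.val ^^^ v.val = 2^i)
    (hlt : u.val < v.val) :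
    ∃ k < s, v.val.testBit k = true ∧ v.val ^^^ 2^k = u.val ∧ u.val ^^^ v.val = 2^k := by
  obtain ⟨k, hks, hx⟩ := h
  have hveq : v.val = u.val ^^^ 2^k := by
    rw [← hx, xor_cancel_left]
  have hbit : v.val.testBit k = true := by
    by_contra hb
    have hub : u.val.testBit k = true := by
      have h1 : (u.val ^^^ v.val).testBit k = true := by
        rw [hx]; exact Nat.testBit_two_pow_self
      rw [Nat.testBit_xor] at h1
      cases hu : u.val.testBit k
      · rw [hu, (by simpa using hb : v.val.testBit k = false)] at h1
        simp at h1
      · rfl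
    have : u.val ^^^ 2^k < u.val := xor_two_pow_lt hub
    rw [← hveq] at this
    omega
  refine ⟨k, hks, hbit, ?_, hx⟩
  rw [hveq, xor_cancel_right]

lemma interiorCount_eq (s : ℕ) (S : Finset (Fin (2^s))) :
    interiorCount (hypercubeGraph s) S = ec s (S.image Fin.val) := by
  set V : Finset ℕ := S.image Fin.val with hVdef
  have hVS : ∀ x : Fin (2^s), x.val ∈ V ↔ x ∈ S := by
    intro x
    rw [hVdef]
    simp only [Finset.mem_image]
    constructor
    · rintro ⟨y, hy, hxy⟩
      rwa [← Fin.val_injective hxy]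
    · intro hx; exact ⟨x, hx, rfl⟩
  have hVlt : ∀ x ∈ V, x < 2^s := by
    intro x hx
    rw [hVdef] at hx
    simp only [Finset.mem_image] at hx
    obtain ⟨y, _, rfl⟩ := hx
    exact y.isLt
  have hec : ec s V = (V.sigma (fun v => (Finset.range s).filter
      (fun i => v.testBit i = true ∧ v ^^^ 2^i ∈ V))).card := by
    rw [Finset.card_sigma]; rfl
  rw [interiorCount, hec]
  have h2pos : 0 < 2^s := Nat.two_pow_pos s
  apply Finset.card_nbij'
    (i := fun e => (⟨eMax e, Nat.log 2 (eXor e)⟩ : Σ _ : ℕ, ℕ))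
    (j := fun b => s((⟨b.1 % 2^s, Nat.mod_lt _ h2pos⟩ : Fin (2^s)),
      (⟨(b.1 ^^^ 2^b.2) % 2^s, Nat.mod_lt _ h2pos⟩ : Fin (2^s))))
  · -- hi
    intro e he
    induction e using Sym2.ind with
    | _ u v =>
      simp only [Finset.mem_coe, Finset.mem_filter, SimpleGraph.mem_edgeFinset,
        SimpleGraph.mem_edgeSet] at he
      obtain ⟨hadj, hmem⟩ := he
      have hu : u ∈ S := hmem u (Sym2.mem_mk_left u v)
      have hv : v ∈ S := hmem v (Sym2.mem_mk_right u v)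
      have hne : u.val ≠ v.val := by
        intro h
        exact (hypercubeGraph s).ne_of_adj hadj (Fin.val_injective h)
      have hx := hyper_adj.mp hadj
      rcases lt_or_gt_of_ne hne with hlt | hlt
      · obtain ⟨k, hks, hbit, hxor, hpow⟩ := edge_struct hx hlt
        simp only [Finset.mem_coe, eMax_mk, eXor_mk, Finset.mem_sigma, Finset.mem_filter,
          Finset.mem_range]
        rw [hpow, Nat.log_pow one_lt_two, Nat.max_eq_right (le_of_lt hlt)]
        refine ⟨(hVS v).mpr hv, hks, hbit, ?_⟩
        rw [hxor]
        exact (hVS u).mpr hu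
      · have hx' : ∃ i < s, v.val ^^^ u.val = 2^i := by
          obtain ⟨i, his, hxx⟩ := hx
          exact ⟨i, his, by rwa [Nat.xor_comm]⟩
        obtain ⟨k, hks, hbit, hxor, hpow⟩ := edge_struct hx' hlt
        simp only [Finset.mem_coe, eMax_mk, eXor_mk, Finset.mem_sigma, Finset.mem_filter,
          Finset.mem_range]
        rw [Nat.xor_comm, hpow, Nat.log_pow one_lt_two,
          Nat.max_eq_left (le_of_lt hlt)]
        refine ⟨(hVS u).mpr hu, hks, hbit, ?_⟩
        rw [hxor]
        exact (hVS v).mpr hv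
  · -- hj
    rintro ⟨v, k⟩ hb
    simp only [Finset.mem_coe, Finset.mem_sigma, Finset.mem_filter, Finset.mem_range] at hb
    obtain ⟨hvV, hks, hbit, hxV⟩ := hb
    have hvlt : v < 2^s := hVlt v hvV
    have hxlt : v ^^^ 2^k < 2^s := hVlt _ hxV
    have hm1 : v % 2^s = v := Nat.mod_eq_of_lt hvlt
    have hm2 : (v ^^^ 2^k) % 2^s = v ^^^ 2^k := Nat.mod_eq_of_lt hxlt
    simp only [Finset.mem_coe, Finset.mem_filter, SimpleGraph.mem_edgeFinset, SimpleGraph.mem_edgeSet]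
    constructor
    · rw [hyper_adj]
      refine ⟨k, hks, ?_⟩
      simp only [hm1, hm2]
      exact xor_cancel_left _ _
    · intro x hx
      rw [Sym2.mem_iff] at hx
      rcases hx with rfl | rfl
      · apply (hVS _).mp
        simpa [hm1] using hvV
      · apply (hVS _).mp
        simpa [hm2] using hxV
  · -- left inverse
    intro e he
    induction e using Sym2.ind with
    | _ u v =>
      simp only [Finset.mem_coe, Finset.mem_filter, SimpleGraph.mem_edgeFinset,
        SimpleGraph.mem_edgeSet] at he
      obtain ⟨hadj, hmem⟩ := he
      have hne : u.val ≠ v.val := by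
        intro h
        exact (hypercubeGraph s).ne_of_adj hadj (Fin.val_injective h)
      have hx := hyper_adj.mp hadj
      rcases lt_or_gt_of_ne hne with hlt | hlt
      · obtain ⟨k, hks, hbit, hxor, hpow⟩ := edge_struct hx hlt
        apply sym2_ext_swap
        · show (eMax s(u,v)) % 2^s = v.val
          rw [eMax_mk, Nat.max_eq_right (le_of_lt hlt), Nat.mod_eq_of_lt v.isLt]
        · show ((eMax s(u,v)) ^^^ 2 ^ Nat.log 2 (eXor s(u,v))) % 2^s = u.val
          rw [eMax_mk, eXor_mk, hpow, Nat.log_pow one_lt_two,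
            Nat.max_eq_right (le_of_lt hlt), hxor, Nat.mod_eq_of_lt u.isLt]
      · have hx' : ∃ i < s, v.val ^^^ u.val = 2^i := by
          obtain ⟨i, his, hxx⟩ := hx
          exact ⟨i, his, by rwa [Nat.xor_comm]⟩
        obtain ⟨k, hks, hbit, hxor, hpow⟩ := edge_struct hx' hlt
        apply sym2_ext
        · show (eMax s(u,v)) % 2^s = u.val
          rw [eMax_mk, Nat.max_eq_left (le_of_lt hlt), Nat.mod_eq_of_lt u.isLt]
        · show ((eMax s(u,v)) ^^^ 2 ^ Nat.log 2 (eXor s(u,v))) % 2^s = v.val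
          rw [eMax_mk, eXor_mk, Nat.xor_comm u.val v.val, hpow,
            Nat.log_pow one_lt_two, Nat.max_eq_left (le_of_lt hlt), hxor,
            Nat.mod_eq_of_lt v.isLt]
  · -- right inverse
    rintro ⟨v, k⟩ hb
    simp only [Finset.mem_coe, Finset.mem_sigma, Finset.mem_filter, Finset.mem_range] at hb
    obtain ⟨hvV, hks, hbit, hxV⟩ := hb
    have hvlt : v < 2^s := hVlt v hvV
    have hxlt : v ^^^ 2^k < 2^s := hVlt _ hxV
    have hm1 : v % 2^s = v := Nat.mod_eq_of_lt hvlt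
    have hm2 : (v ^^^ 2^k) % 2^s = v ^^^ 2^k := Nat.mod_eq_of_lt hxlt
    simp only [eMax_mk, eXor_mk, hm1, hm2]
    have hxs : v ^^^ 2^k < v := xor_two_pow_lt hbit
    have hmax : max v (v ^^^ 2^k) = v := Nat.max_eq_left (le_of_lt hxs)
    have hxx : v ^^^ (v ^^^ 2^k) = 2^k := xor_cancel_left _ _
    rw [hmax, hxx, Nat.log_pow one_lt_two]

lemma ec_range (s j : ℕ) (hj : j ≤ 2^s) : ec s (Finset.range j) = ff j := by
  rw [ec, ff]
  apply Finset.sum_congr rfl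
  intro v hv
  rw [Finset.mem_range] at hv
  have hvlt : v < 2^s := lt_of_lt_of_le hv hj
  rw [cnt]
  rw [← pc_card hvlt]
  congr 1
  apply Finset.filter_congr
  intro i hi
  rw [Finset.mem_range] at hi
  constructor
  · rintro ⟨hb, _⟩; exact hb
  · intro hb
    refine ⟨hb, ?_⟩
    rw [Finset.mem_range]
    exact lt_trans (xor_two_pow_lt hb) hv

/-- In the hypercube `Q^s`, for `1 ≤ j ≤ 2^s`, the set `L_j = {0, 1, …, j − 1}`
is an optimal set on `j` vertices for the maximum subgraph problem. -/
theorem hypercube_initial_segment_optimal (s : ℕ) (hs : 1 ≤ s)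
    (j : ℕ) (hj₁ : 1 ≤ j) (hj₂ : j ≤ 2 ^ s)
    (S : Finset (Fin (2 ^ s))) (hS : S.card = j) :
    interiorCount (hypercubeGraph s) S ≤
      interiorCount (hypercubeGraph s)
        (Finset.univ.filter (fun v : Fin (2 ^ s) => v.val < j)) := by
  rw [interiorCount_eq, interiorCount_eq]
  have himg : (Finset.univ.filter (fun v : Fin (2 ^ s) => v.val < j)).image Fin.val
      = Finset.range j := by
    ext x
    simp only [Finset.mem_image, Finset.mem_filter, Finset.mem_univ, true_and,
      Finset.mem_range]
    constructor
    · rintro ⟨y, hy, rfl⟩; exact hy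
    · intro hx
      exact ⟨⟨x, lt_of_lt_of_le hx hj₂⟩, hx, rfl⟩
  rw [himg, ec_range s j hj₂]
  have hcard : (S.image Fin.val).card = j := by
    rw [Finset.card_image_of_injective _ Fin.val_injective, hS]
  have hbound : ∀ v ∈ S.image Fin.val, v < 2^s := by
    intro v hv
    simp only [Finset.mem_image] at hv
    obtain ⟨x, _, rfl⟩ := hv
    exact x.isLt
  calc ec s (S.image Fin.val) ≤ ff (S.image Fin.val).card := ec_le s _ hbound
    _ = ff j := by rw [hcard]
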